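/- Any t−1 shares of a (t, n) Shamir scheme over a finite field F are jointly independent of the secret: for any fixed secret S, distinct nonzero points x_1,…,x_{t−1}, and any target values y_1,…,y_{t−1} in F, the probability over the uniform random choice of coefficients a_1,…,a_{t−1} that f(x_j) = y_j for all j equals |F|^{-(t−1)}. -/
import Mathlib


open Finset

/-- Information-theoretic security of Shamir's Secret Sharing: for any secret `S`,
distinct nonzero evaluation points `x_1,…,x_{t-1}`, and any target values `y_j`, the
probability over the uniform independent choice of coefficients `a_1,…,a_{t-1}` that
`f (x j) = y j` for all `j` equals `|F|^{-(t-1)}`. -/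
theorem shamir_t_minus_one_shares_independent (F : Type) [Field F] [Fintype F]
    [DecidableEq F] (t : ℕ) (ht : 2 ≤ t) (S : F)
    (x : Fin (t - 1) → F) (hx : Function.Injective x) (hx0 : ∀ j, x j ≠ 0)
    (y : Fin (t - 1) → F) :
    (Fintype.card {a : Fin (t - 1) → F //
        ∀ j, S + ∑ k : Fin (t - 1), a k * (x j) ^ (k.val + 1) = y j} : ℚ) /
        (Fintype.card F : ℚ) ^ (t - 1) =
      ((Fintype.card F : ℚ) ^ (t - 1))⁻¹ := by
  set M : Matrix (Fin (t - 1)) (Fin (t - 1)) F :=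
    Matrix.of fun j k => (x j) ^ (k.val + 1) with hM
  have hMdet : M.det ≠ 0 := by
    have hMeq : M = Matrix.diagonal x * Matrix.vandermonde x := by
      ext j k
      simp [hM, Matrix.vandermonde, Matrix.mul_apply, Matrix.diagonal_apply,
        pow_succ, mul_comm]
    rw [hMeq, Matrix.det_mul, Matrix.det_diagonal, Matrix.det_vandermonde]
    apply mul_ne_zero
    · exact Finset.prod_ne_zero_iff.2 fun j _ => hx0 j
    · exact Finset.prod_ne_zero_iff.2 fun i _ =>
        Finset.prod_ne_zero_iff.2 fun j hj => sub_ne_zero_of_ne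
          fun h => (Finset.mem_Ioi.1 hj).ne' (hx h)
  have hinj : Function.Injective M.mulVec :=
    Matrix.mulVec_injective_iff_isUnit.2 ((Matrix.isUnit_iff_isUnit_det M).2
      (isUnit_iff_ne_zero.2 hMdet))
  have hbij : Function.Bijective M.mulVec := (Finite.injective_iff_bijective).1 hinj
  set c : Fin (t - 1) → F := fun j => y j - S with hc
  obtain ⟨a₀, ha₀⟩ := hbij.2 c
  have hiff : ∀ a : Fin (t - 1) → F,
      (∀ j, S + ∑ k : Fin (t - 1), a k * (x j) ^ (k.val + 1) = y j) ↔ M.mulVec a = c := by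
    intro a
    constructor
    · intro h; funext j
      have := h j
      simp only [Matrix.mulVec, dotProduct, hM, Matrix.of_apply, hc]
      rw [Finset.sum_congr rfl fun k _ => mul_comm ((x j) ^ (k.val + 1)) (a k)]
      linear_combination h j
    · intro h j
      have := congrFun h j
      simp only [Matrix.mulVec, dotProduct, hM, Matrix.of_apply, hc] at this
      rw [Finset.sum_congr rfl fun k _ => mul_comm ((x j) ^ (k.val + 1)) (a k)] at this
      linear_combination this
  have hcard : Fintype.card {a : Fin (t - 1) → F //
      ∀ j, S + ∑ k : Fin (t - 1), a k * (x j) ^ (k.val + 1) = y j} = 1 := by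
    rw [Fintype.card_eq_one_iff]
    refine ⟨⟨a₀, (hiff a₀).2 ha₀⟩, fun b => ?_⟩
    exact Subtype.ext (hinj (((hiff b).1 b.2).trans ha₀.symm))
  rw [hcard]
  have hF : (0 : ℚ) < (Fintype.card F : ℚ) := by exact_mod_cast Fintype.card_pos
  rw [Nat.cast_one, one_div]
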